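/- (Hatsell–Nolte) For the channel Y = Z + N, the log-likelihood ratio satisfies Poisson's equation: the Laplacian ∇² log l(y) equals E[‖Z‖^2 | Y = y] − ‖E[Z | Y = y]‖^2 for every y ∈ ℝ^L. -/

import Mathlib

open MeasureTheory ProbabilityTheory Real Filter
open scoped ENNReal NNReal Topology

noncomputable section

/-- Density `p_N(y) = (2π)^{-L/2} exp(-‖y‖²/2)` of the `L`-dimensional standard Gaussian. -/
def stdGaussianDensity {L : ℕ} (y : EuclideanSpace ℝ (Fin L)) : ℝ :=
  (2 * π) ^ (-(L : ℝ) / 2) * Real.exp (-‖y‖ ^ 2 / 2)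

/-- Density `p_Y(y) = E[p_N(y − Z)]` of the output `Y = Z + N` of the standard Gaussian
channel with input `Z`. -/
def outDensity {Ω : Type*} [MeasurableSpace Ω] {L : ℕ} (μ : Measure Ω)
    (Z : Ω → EuclideanSpace ℝ (Fin L)) (y : EuclideanSpace ℝ (Fin L)) : ℝ :=
  ∫ ω, stdGaussianDensity (y - Z ω) ∂μ

/-- Likelihood ratio `l(y) = p_Y(y) / p_N(y)`. -/
def likRatio {Ω : Type*} [MeasurableSpace Ω] {L : ℕ} (μ : Measure Ω)
    (Z : Ω → EuclideanSpace ℝ (Fin L)) (y : EuclideanSpace ℝ (Fin L)) : ℝ :=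
  outDensity μ Z y / stdGaussianDensity y

/-- Conditional mean `E[Z | Y = y] = E[Z · p_N(y − Z)] / p_Y(y)` of the input `Z` given the
output value `Y = y` (Bayes formula). -/
def condMeanBayes {Ω : Type*} [MeasurableSpace Ω] {L : ℕ} (μ : Measure Ω)
    (Z : Ω → EuclideanSpace ℝ (Fin L)) (y : EuclideanSpace ℝ (Fin L)) :
    EuclideanSpace ℝ (Fin L) :=
  WithLp.toLp 2 (fun l => (∫ ω, Z ω l * stdGaussianDensity (y - Z ω) ∂μ) / outDensity μ Z y)

/-- The Laplacian `∇²f(y) = Σ_l ∂²f/∂y_l²` of a function on `ℝ^L`. -/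
def laplacian {L : ℕ} (f : EuclideanSpace ℝ (Fin L) → ℝ) (y : EuclideanSpace ℝ (Fin L)) : ℝ :=
  ∑ l, fderiv ℝ (fun z => fderiv ℝ f z (EuclideanSpace.single l 1)) y
    (EuclideanSpace.single l 1)

lemma HN_aux1 (t : ℝ) (ht : 0 ≤ t) : t * Real.exp (-t ^ 2 / 2) ≤ 1 := by
  have h1 : t ≤ Real.exp (t ^ 2 / 2) := by
    have := Real.add_one_le_exp (t ^ 2 / 2)
    nlinarith [sq_nonneg (t - 1)]
  have h2 : Real.exp (-t ^ 2 / 2) = (Real.exp (t ^ 2 / 2))⁻¹ := by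
    rw [← Real.exp_neg]; ring_nf
  rw [h2]
  rw [mul_inv_le_iff₀ (Real.exp_pos _)]
  linarith

lemma HN_aux2 (t : ℝ) : t ^ 2 * Real.exp (-t ^ 2 / 2) ≤ 2 := by
  have h1 : t ^ 2 / 2 ≤ Real.exp (t ^ 2 / 2) := by
    have := Real.add_one_le_exp (t ^ 2 / 2)
    linarith
  have h2 : Real.exp (-t ^ 2 / 2) = (Real.exp (t ^ 2 / 2))⁻¹ := by
    rw [← Real.exp_neg]; ring_nf
  rw [h2, mul_inv_le_iff₀ (Real.exp_pos _)]
  linarith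

lemma stdGaussianDensity_pos {L : ℕ} (y : EuclideanSpace ℝ (Fin L)) :
    0 < stdGaussianDensity y :=
  mul_pos (Real.rpow_pos_of_pos (by positivity) _) (Real.exp_pos _)

lemma stdGaussianDensity_le {L : ℕ} (y : EuclideanSpace ℝ (Fin L)) :
    stdGaussianDensity y ≤ (2 * π) ^ (-(L : ℝ) / 2) := by
  have : Real.exp (-‖y‖ ^ 2 / 2) ≤ 1 := by
    rw [Real.exp_le_one_iff]; nlinarith [sq_nonneg ‖y‖]
  calc stdGaussianDensity y ≤ (2 * π) ^ (-(L : ℝ) / 2) * 1 := by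
        exact mul_le_mul_of_nonneg_left this (le_of_lt (Real.rpow_pos_of_pos (by positivity) _))
    _ = _ := mul_one _

/-- Derivative of the Gaussian density. -/
def gaussD {L : ℕ} (x : EuclideanSpace ℝ (Fin L)) :
    EuclideanSpace ℝ (Fin L) →L[ℝ] ℝ :=
  (-stdGaussianDensity x) • innerSL ℝ x

lemma hasFDerivAt_stdGaussianDensity {L : ℕ} (x : EuclideanSpace ℝ (Fin L)) :
    HasFDerivAt stdGaussianDensity (gaussD x) x := by
  have h1 : HasFDerivAt (fun y : EuclideanSpace ℝ (Fin L) => ‖y‖ ^ 2) (2 • innerSL ℝ x) x :=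
    (hasStrictFDerivAt_norm_sq x).hasFDerivAt
  have h2 := (h1.const_smul ((-(1:ℝ))/2)).exp
  have h4 : HasFDerivAt (fun y : EuclideanSpace ℝ (Fin L) =>
      ((2 * π) ^ (-(L : ℝ) / 2)) • Real.exp (((-(1:ℝ))/2) • ‖y‖ ^ 2))
      (((2 * π) ^ (-(L : ℝ) / 2)) • Real.exp (((-(1:ℝ))/2) • ‖x‖ ^ 2) •
        ((-(1:ℝ))/2) • (2 • innerSL ℝ x)) x := h2.const_smul ((2 * π) ^ (-(L : ℝ) / 2))
  have hfun : (fun y : EuclideanSpace ℝ (Fin L) =>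
      ((2 * π) ^ (-(L : ℝ) / 2)) • Real.exp (((-(1:ℝ))/2) • ‖y‖ ^ 2)) = stdGaussianDensity := by
    funext y
    rw [show (((-(1:ℝ))/2) • ‖y‖ ^ 2) = -‖y‖ ^ 2 / 2 by rw [smul_eq_mul]; ring]
    rw [stdGaussianDensity, smul_eq_mul]
  rw [hfun] at h4
  have hD : ((2 * π) ^ (-(L : ℝ) / 2)) • Real.exp (((-(1:ℝ))/2) • ‖x‖ ^ 2) •
      ((-(1:ℝ))/2) • (2 • innerSL ℝ x) = gaussD x := by
    ext v
    rw [show (((-(1:ℝ))/2) • ‖x‖ ^ 2) = -‖x‖ ^ 2 / 2 by rw [smul_eq_mul]; ring]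
    simp [gaussD, stdGaussianDensity, two_smul]
    ring
  rw [hD] at h4
  exact h4

lemma abs_coord_le_norm {L : ℕ} (x : EuclideanSpace ℝ (Fin L)) (l : Fin L) :
    |x l| ≤ ‖x‖ := by
  have h := abs_real_inner_le_norm x (EuclideanSpace.single l (1:ℝ))
  rw [EuclideanSpace.inner_single_right, EuclideanSpace.norm_single] at h
  simpa using h

lemma norm_gaussD_le {L : ℕ} (x : EuclideanSpace ℝ (Fin L)) :
    ‖gaussD x‖ ≤ (2 * π) ^ (-(L : ℝ) / 2) := by
  have hc : (0:ℝ) ≤ (2 * π) ^ (-(L : ℝ) / 2) := le_of_lt (Real.rpow_pos_of_pos (by positivity) _)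
  apply ContinuousLinearMap.opNorm_le_bound _ hc
  intro v
  have h1 : |(gaussD x) v| = stdGaussianDensity x * |inner ℝ x v| := by
    simp [gaussD, abs_mul, abs_of_pos (stdGaussianDensity_pos x)]
  rw [Real.norm_eq_abs, h1]
  have h2 : |(inner ℝ x v : ℝ)| ≤ ‖x‖ * ‖v‖ := abs_real_inner_le_norm x v
  have h3 : stdGaussianDensity x * ‖x‖ ≤ (2 * π) ^ (-(L : ℝ) / 2) := by
    rw [stdGaussianDensity, mul_assoc]
    have := HN_aux1 ‖x‖ (norm_nonneg x)
    nlinarith [Real.rpow_pos_of_pos (show (0:ℝ) < 2*π by positivity) (-(L : ℝ) / 2),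
      Real.exp_pos (-‖x‖^2/2), norm_nonneg x]
  calc stdGaussianDensity x * |inner ℝ x v| ≤ stdGaussianDensity x * (‖x‖ * ‖v‖) := by
        exact mul_le_mul_of_nonneg_left h2 (le_of_lt (stdGaussianDensity_pos x))
    _ = (stdGaussianDensity x * ‖x‖) * ‖v‖ := by ring
    _ ≤ _ := mul_le_mul_of_nonneg_right h3 (norm_nonneg v)

def gaussPsi {L : ℕ} (l : Fin L) (x : EuclideanSpace ℝ (Fin L)) : ℝ :=
  -(x l) * stdGaussianDensity x

def gaussD2 {L : ℕ} (l : Fin L) (x : EuclideanSpace ℝ (Fin L)) :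
    EuclideanSpace ℝ (Fin L) →L[ℝ] ℝ :=
  (x l * stdGaussianDensity x) • innerSL ℝ x -
    stdGaussianDensity x • (EuclideanSpace.proj l : EuclideanSpace ℝ (Fin L) →L[ℝ] ℝ)

lemma hasFDerivAt_gaussPsi {L : ℕ} (l : Fin L) (x : EuclideanSpace ℝ (Fin L)) :
    HasFDerivAt (gaussPsi l) (gaussD2 l x) x := by
  have h1 : HasFDerivAt (fun y : EuclideanSpace ℝ (Fin L) => -(y l))
      (-(EuclideanSpace.proj l : EuclideanSpace ℝ (Fin L) →L[ℝ] ℝ)) x :=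
    ((EuclideanSpace.proj l : EuclideanSpace ℝ (Fin L) →L[ℝ] ℝ).hasFDerivAt).neg
  have h2 := h1.mul (hasFDerivAt_stdGaussianDensity x)
  have hD : (-(x l)) • gaussD x + stdGaussianDensity x •
      (-(EuclideanSpace.proj l : EuclideanSpace ℝ (Fin L) →L[ℝ] ℝ)) = gaussD2 l x := by
    ext v
    simp [gaussD, gaussD2]
    ring
  rw [hD] at h2
  exact h2

lemma norm_gaussD2_le {L : ℕ} (l : Fin L) (x : EuclideanSpace ℝ (Fin L)) :
    ‖gaussD2 l x‖ ≤ 3 * (2 * π) ^ (-(L : ℝ) / 2) := by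
  have hcpos : (0:ℝ) < (2 * π) ^ (-(L : ℝ) / 2) := Real.rpow_pos_of_pos (by positivity) _
  apply ContinuousLinearMap.opNorm_le_bound _ (by positivity)
  intro v
  have hφ := stdGaussianDensity_pos x
  have h1 : (gaussD2 l x) v = x l * stdGaussianDensity x * (inner ℝ x v : ℝ)
      - stdGaussianDensity x * v l := by
    simp [gaussD2]
  rw [Real.norm_eq_abs, h1]
  have h2 : |x l * stdGaussianDensity x * (inner ℝ x v : ℝ) - stdGaussianDensity x * v l|
      ≤ ‖x‖ * stdGaussianDensity x * (‖x‖ * ‖v‖) + stdGaussianDensity x * ‖v‖ := by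
    refine (abs_sub _ _).trans ?_
    gcongr
    · calc |x l * stdGaussianDensity x * (inner ℝ x v : ℝ)|
          = |x l| * stdGaussianDensity x * |(inner ℝ x v : ℝ)| := by
            rw [abs_mul, abs_mul, abs_of_pos hφ]
      _ ≤ ‖x‖ * stdGaussianDensity x * (‖x‖ * ‖v‖) := by
            apply mul_le_mul
            · exact mul_le_mul_of_nonneg_right (abs_coord_le_norm x l) hφ.le
            · exact abs_real_inner_le_norm x v
            · exact abs_nonneg _
            · positivity
    · rw [abs_mul, abs_of_pos hφ]
      exact mul_le_mul_of_nonneg_left (abs_coord_le_norm v l) hφ.le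
  refine h2.trans ?_
  have hx2 : stdGaussianDensity x * ‖x‖ ^ 2 ≤ 2 * (2 * π) ^ (-(L : ℝ) / 2) := by
    rw [stdGaussianDensity, mul_assoc]
    have := HN_aux2 ‖x‖
    nlinarith [Real.exp_pos (-‖x‖^2/2)]
  have hle := stdGaussianDensity_le x
  nlinarith [norm_nonneg v, norm_nonneg x, sq_nonneg ‖x‖, mul_le_mul_of_nonneg_right hx2 (norm_nonneg v), mul_le_mul_of_nonneg_right hle (norm_nonneg v)]

lemma continuous_stdGaussianDensity {L : ℕ} :
    Continuous (stdGaussianDensity (L := L)) := by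
  unfold stdGaussianDensity
  fun_prop

lemma continuous_gaussD {L : ℕ} : Continuous (gaussD (L := L)) := by
  unfold gaussD
  exact (continuous_stdGaussianDensity.neg).smul (innerSL ℝ).continuous

lemma continuous_gaussD2 {L : ℕ} (l : Fin L) : Continuous (gaussD2 l) := by
  unfold gaussD2
  apply Continuous.sub
  · exact (((EuclideanSpace.proj l : EuclideanSpace ℝ (Fin L) →L[ℝ] ℝ).continuous).mul
      continuous_stdGaussianDensity).smul (innerSL ℝ).continuous
  · exact continuous_stdGaussianDensity.smul continuous_const

lemma continuous_gaussPsi {L : ℕ} (l : Fin L) : Continuous (gaussPsi l) := by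
  unfold gaussPsi
  exact ((EuclideanSpace.proj l : EuclideanSpace ℝ (Fin L) →L[ℝ] ℝ).continuous.neg).mul
    continuous_stdGaussianDensity

section

variable {Ω : Type*} [MeasurableSpace Ω] {L : ℕ} {μ : Measure Ω} [IsProbabilityMeasure μ]
  {Z : Ω → EuclideanSpace ℝ (Fin L)}

lemma HN_meas (hZ : Measurable Z) {V : Type*} [NormedAddCommGroup V]
    [TopologicalSpace.PseudoMetrizableSpace V] {F : EuclideanSpace ℝ (Fin L) → V}
    (hF : Continuous F) (y : EuclideanSpace ℝ (Fin L)) :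
    AEStronglyMeasurable (fun ω => F (y - Z ω)) μ :=
  (hF.stronglyMeasurable.comp_measurable (measurable_const.sub hZ)).aestronglyMeasurable

lemma HN_int_bdd (hZ : Measurable Z) {V : Type*} [NormedAddCommGroup V]
    [TopologicalSpace.PseudoMetrizableSpace V] {F : EuclideanSpace ℝ (Fin L) → V}
    (hF : Continuous F) (C : ℝ) (hC : ∀ x, ‖F x‖ ≤ C) (y : EuclideanSpace ℝ (Fin L)) :
    Integrable (fun ω => F (y - Z ω)) μ :=
  (integrable_const C).mono' (HN_meas hZ hF y) (ae_of_all _ fun ω => hC _)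

lemma HN_hasFDerivAt_comp_sub {L : ℕ} {F : EuclideanSpace ℝ (Fin L) → ℝ}
    {F' : EuclideanSpace ℝ (Fin L) → (EuclideanSpace ℝ (Fin L) →L[ℝ] ℝ)}
    (h : ∀ u, HasFDerivAt F (F' u) u) (z x : EuclideanSpace ℝ (Fin L)) :
    HasFDerivAt (fun w => F (w - z)) (F' (x - z)) x := by
  have := (h (x - z)).comp x ((hasFDerivAt_id x).sub_const z)
  simp at this; exact this

lemma hasFDerivAt_outDensity (hZ : Measurable Z) (y : EuclideanSpace ℝ (Fin L)) :
    HasFDerivAt (outDensity μ Z) (∫ ω, gaussD (y - Z ω) ∂μ) y := by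
  apply hasFDerivAt_integral_of_dominated_of_fderiv_le
    (F := fun x ω => stdGaussianDensity (x - Z ω)) (F' := fun x ω => gaussD (x - Z ω))
    (bound := fun _ => (2 * π) ^ (-(L : ℝ) / 2)) (s := Metric.ball y 1) (Metric.ball_mem_nhds y zero_lt_one)
  · exact Filter.Eventually.of_forall fun x => HN_meas hZ continuous_stdGaussianDensity x
  · exact HN_int_bdd hZ continuous_stdGaussianDensity _
      (fun x => by rw [Real.norm_eq_abs, abs_of_pos (stdGaussianDensity_pos x)]
                   exact stdGaussianDensity_le x) y
  · exact HN_meas hZ continuous_gaussD y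
  · exact ae_of_all _ fun ω x _ => norm_gaussD_le _
  · exact integrable_const _
  · exact ae_of_all _ fun ω x _ =>
      HN_hasFDerivAt_comp_sub (fun u => hasFDerivAt_stdGaussianDensity u) (Z ω) x

lemma hasFDerivAt_psiInt (hZ : Measurable Z) (l : Fin L) (y : EuclideanSpace ℝ (Fin L)) :
    HasFDerivAt (fun w => ∫ ω, gaussPsi l (w - Z ω) ∂μ) (∫ ω, gaussD2 l (y - Z ω) ∂μ) y := by
  apply hasFDerivAt_integral_of_dominated_of_fderiv_le
    (F := fun x ω => gaussPsi l (x - Z ω)) (F' := fun x ω => gaussD2 l (x - Z ω))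
    (bound := fun _ => 3 * (2 * π) ^ (-(L : ℝ) / 2)) (s := Metric.ball y 1) (Metric.ball_mem_nhds y zero_lt_one)
  · exact Filter.Eventually.of_forall fun x => HN_meas hZ (continuous_gaussPsi l) x
  · refine HN_int_bdd hZ (continuous_gaussPsi l) ((2 * π) ^ (-(L : ℝ) / 2)) (fun x => ?_) y
    have hφ := stdGaussianDensity_pos x
    have h1 : ‖gaussPsi l x‖ = |x l| * stdGaussianDensity x := by
      rw [gaussPsi, Real.norm_eq_abs, abs_mul, abs_neg, abs_of_pos hφ]
    rw [h1]
    calc |x l| * stdGaussianDensity x ≤ ‖x‖ * stdGaussianDensity x :=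
          mul_le_mul_of_nonneg_right (abs_coord_le_norm x l) hφ.le
      _ ≤ (2 * π) ^ (-(L : ℝ) / 2) := by
          rw [stdGaussianDensity, show ‖x‖ * ((2 * π) ^ (-(L:ℝ)/2) * Real.exp (-‖x‖^2/2))
              = (2 * π) ^ (-(L:ℝ)/2) * (‖x‖ * Real.exp (-‖x‖^2/2)) by ring]
          have := HN_aux1 ‖x‖ (norm_nonneg x)
          nlinarith [Real.rpow_pos_of_pos (show (0:ℝ) < 2*π by positivity) (-(L : ℝ) / 2)]
  · exact HN_meas hZ (continuous_gaussD2 l) y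
  · exact ae_of_all _ fun ω x _ => norm_gaussD2_le l _
  · exact integrable_const _
  · exact ae_of_all _ fun ω x _ =>
      HN_hasFDerivAt_comp_sub (fun u => hasFDerivAt_gaussPsi l u) (Z ω) x

lemma outDensity_pos (hZ : Measurable Z) (z : EuclideanSpace ℝ (Fin L)) :
    0 < outDensity μ Z z := by
  rw [outDensity]
  have hint : Integrable (fun ω => stdGaussianDensity (z - Z ω)) μ :=
    HN_int_bdd hZ continuous_stdGaussianDensity _
      (fun x => by rw [Real.norm_eq_abs, abs_of_pos (stdGaussianDensity_pos x)]
                   exact stdGaussianDensity_le x) z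
  rw [integral_pos_iff_support_of_nonneg_ae
    (ae_of_all _ fun ω => (stdGaussianDensity_pos _).le) hint]
  have : (Function.support fun ω => stdGaussianDensity (z - Z ω)) = Set.univ := by
    ext ω; simp [Function.support, (stdGaussianDensity_pos (z - Z ω)).ne']
  rw [this]
  simp

lemma integrable_gaussD_comp (hZ : Measurable Z) (y : EuclideanSpace ℝ (Fin L)) :
    Integrable (fun ω => gaussD (y - Z ω)) μ :=
  HN_int_bdd hZ continuous_gaussD _ norm_gaussD_le y

lemma gaussD_apply_single {L : ℕ} (x : EuclideanSpace ℝ (Fin L)) (l : Fin L) :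
    gaussD x (EuclideanSpace.single l 1) = gaussPsi l x := by
  simp [gaussD, gaussPsi, EuclideanSpace.inner_single_right]
  ring

lemma fderiv_log_likRatio_apply (hZ : Measurable Z) (z : EuclideanSpace ℝ (Fin L)) (l : Fin L) :
    fderiv ℝ (fun w => Real.log (likRatio μ Z w)) z (EuclideanSpace.single l 1)
      = (∫ ω, gaussPsi l (z - Z ω) ∂μ) * (outDensity μ Z z)⁻¹ + z l := by
  have hg := hasFDerivAt_outDensity (μ := μ) hZ z
  have hgpos := outDensity_pos (μ := μ) hZ z
  have hφpos := stdGaussianDensity_pos z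
  have h1 : HasFDerivAt (fun w => Real.log (outDensity μ Z w))
      ((outDensity μ Z z)⁻¹ • ∫ ω, gaussD (z - Z ω) ∂μ) z := by
    have := (Real.hasDerivAt_log hgpos.ne').comp_hasFDerivAt z hg
    exact this
  have h2 : HasFDerivAt (fun w => Real.log (stdGaussianDensity w))
      ((stdGaussianDensity z)⁻¹ • gaussD z) z := by
    have := (Real.hasDerivAt_log hφpos.ne').comp_hasFDerivAt z
      (hasFDerivAt_stdGaussianDensity z)
    exact this
  have h3 := h1.sub h2
  have hfu : (fun w => Real.log (likRatio μ Z w))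
      = fun w => Real.log (outDensity μ Z w) - Real.log (stdGaussianDensity w) := by
    funext w
    rw [likRatio, Real.log_div (outDensity_pos hZ w).ne' (stdGaussianDensity_pos w).ne']
  rw [hfu, (show HasFDerivAt (fun w => Real.log (outDensity μ Z w) - Real.log (stdGaussianDensity w)) _ z from h3).fderiv]
  simp only [ContinuousLinearMap.coe_sub', Pi.sub_apply, ContinuousLinearMap.coe_smul',
    Pi.smul_apply, smul_eq_mul]
  rw [ContinuousLinearMap.integral_apply (integrable_gaussD_comp hZ z)]
  simp only [gaussD_apply_single]
  rw [show gaussPsi l z = -(z l) * stdGaussianDensity z from rfl]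
  field_simp
  ring

lemma integrable_gaussD2_comp (hZ : Measurable Z) (l : Fin L) (y : EuclideanSpace ℝ (Fin L)) :
    Integrable (fun ω => gaussD2 l (y - Z ω)) μ :=
  HN_int_bdd hZ (continuous_gaussD2 l) _ (norm_gaussD2_le l) y

lemma gaussD2_apply_single {L : ℕ} (x : EuclideanSpace ℝ (Fin L)) (l : Fin L) :
    gaussD2 l x (EuclideanSpace.single l 1)
      = (x l) ^ 2 * stdGaussianDensity x - stdGaussianDensity x := by
  simp [gaussD2, EuclideanSpace.inner_single_right]
  ring

lemma fderiv_fderiv_log_likRatio (hZ : Measurable Z) (y : EuclideanSpace ℝ (Fin L)) (l : Fin L) :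
    fderiv ℝ (fun z => fderiv ℝ (fun w => Real.log (likRatio μ Z w)) z
        (EuclideanSpace.single l 1)) y (EuclideanSpace.single l 1)
      = (∫ ω, ((y - Z ω) l ^ 2 * stdGaussianDensity (y - Z ω)
            - stdGaussianDensity (y - Z ω)) ∂μ) * (outDensity μ Z y)⁻¹
        - (∫ ω, gaussPsi l (y - Z ω) ∂μ) ^ 2 * ((outDensity μ Z y) ^ 2)⁻¹ + 1 := by
  have hfu : (fun z => fderiv ℝ (fun w => Real.log (likRatio μ Z w)) z
      (EuclideanSpace.single l 1))
      = fun z => (∫ ω, gaussPsi l (z - Z ω) ∂μ) * (outDensity μ Z z)⁻¹ + z l :=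
    funext fun z => fderiv_log_likRatio_apply hZ z l
  rw [hfu]
  have ha := hasFDerivAt_psiInt (μ := μ) hZ l y
  have hg := hasFDerivAt_outDensity (μ := μ) hZ y
  have hgpos := outDensity_pos (μ := μ) hZ y
  have hinv : HasFDerivAt (fun z => (outDensity μ Z z)⁻¹)
      ((-((outDensity μ Z y) ^ 2)⁻¹) • ∫ ω, gaussD (y - Z ω) ∂μ) y := by
    have := (hasDerivAt_inv hgpos.ne').comp_hasFDerivAt y hg
    exact this
  have hproj : HasFDerivAt (fun z : EuclideanSpace ℝ (Fin L) => z l)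
      (EuclideanSpace.proj l : EuclideanSpace ℝ (Fin L) →L[ℝ] ℝ) y :=
    (EuclideanSpace.proj l : EuclideanSpace ℝ (Fin L) →L[ℝ] ℝ).hasFDerivAt
  have htot := (ha.mul hinv).add hproj
  rw [(show HasFDerivAt (fun z => (∫ ω, gaussPsi l (z - Z ω) ∂μ) * (outDensity μ Z z)⁻¹ + z l) _ y from htot).fderiv]
  simp only [ContinuousLinearMap.add_apply, ContinuousLinearMap.coe_smul', Pi.smul_apply,
    smul_eq_mul]
  rw [ContinuousLinearMap.integral_apply (integrable_gaussD_comp hZ y),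
    ContinuousLinearMap.integral_apply (integrable_gaussD2_comp hZ l y)]
  simp only [gaussD_apply_single, gaussD2_apply_single]
  have hp : (EuclideanSpace.proj l : EuclideanSpace ℝ (Fin L) →L[ℝ] ℝ)
      (EuclideanSpace.single l 1) = 1 := by
    simp [EuclideanSpace.single_apply]
  rw [hp]
  ring


lemma HN_int_dom (hZ2 : Integrable (fun ω => ‖Z ω‖ ^ 2) μ) {f : Ω → ℝ}
    (hf : AEStronglyMeasurable f μ) (C : ℝ)
    (hb : ∀ ω, |f ω| ≤ C * (1 + ‖Z ω‖ ^ 2)) : Integrable f μ := by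
  have h := ((integrable_const (1:ℝ)).add hZ2).const_mul C
  exact h.mono' hf (ae_of_all _ fun ω => by
    simpa [Real.norm_eq_abs] using hb ω)

lemma integrable_Zl_phi (hZ : Measurable Z) (hZ2 : Integrable (fun ω => ‖Z ω‖ ^ 2) μ)
    (y : EuclideanSpace ℝ (Fin L)) (l : Fin L) :
    Integrable (fun ω => Z ω l * stdGaussianDensity (y - Z ω)) μ := by
  refine HN_int_dom hZ2 ?_ ((2 * π) ^ (-(L : ℝ) / 2)) (fun ω => ?_)
  · exact (((EuclideanSpace.proj l : EuclideanSpace ℝ (Fin L) →L[ℝ] ℝ).continuous.measurable.comp hZ).mul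
      (continuous_stdGaussianDensity.measurable.comp
        (measurable_const.sub hZ))).aestronglyMeasurable
  · have hφpos := stdGaussianDensity_pos (y - Z ω)
    have hφle := stdGaussianDensity_le (y - Z ω)
    have h1 : |Z ω l| ≤ ‖Z ω‖ := abs_coord_le_norm _ l
    have hc : (0:ℝ) < (2 * π) ^ (-(L : ℝ) / 2) := Real.rpow_pos_of_pos (by positivity) _
    rw [abs_mul, abs_of_pos hφpos]
    nlinarith [mul_le_mul_of_nonneg_left hφle (abs_nonneg (Z ω l)),
      mul_le_mul_of_nonneg_right h1 hc.le, norm_nonneg (Z ω), sq_nonneg (‖Z ω‖ - 1)]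

lemma integrable_Zl_sq_phi (hZ : Measurable Z) (hZ2 : Integrable (fun ω => ‖Z ω‖ ^ 2) μ)
    (y : EuclideanSpace ℝ (Fin L)) (l : Fin L) :
    Integrable (fun ω => Z ω l ^ 2 * stdGaussianDensity (y - Z ω)) μ := by
  refine HN_int_dom hZ2 ?_ ((2 * π) ^ (-(L : ℝ) / 2)) (fun ω => ?_)
  · exact ((((EuclideanSpace.proj l : EuclideanSpace ℝ (Fin L) →L[ℝ] ℝ).continuous.measurable.comp hZ).pow_const 2).mul
      (continuous_stdGaussianDensity.measurable.comp
        (measurable_const.sub hZ))).aestronglyMeasurable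
  · have hφpos := stdGaussianDensity_pos (y - Z ω)
    have hφle := stdGaussianDensity_le (y - Z ω)
    have h1 : |Z ω l| ≤ ‖Z ω‖ := abs_coord_le_norm _ l
    have h1' : Z ω l ^ 2 ≤ ‖Z ω‖ ^ 2 := by nlinarith [abs_nonneg (Z ω l), sq_abs (Z ω l)]
    have hc : (0:ℝ) < (2 * π) ^ (-(L : ℝ) / 2) := Real.rpow_pos_of_pos (by positivity) _
    rw [abs_mul, abs_of_pos hφpos, abs_of_nonneg (sq_nonneg (Z ω l))]
    nlinarith [mul_le_mul_of_nonneg_left hφle (sq_nonneg (Z ω l)),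
      mul_le_mul_of_nonneg_right h1' hc.le, sq_nonneg ‖Z ω‖]


lemma integrable_phi_comp (hZ : Measurable Z) (y : EuclideanSpace ℝ (Fin L)) :
    Integrable (fun ω => stdGaussianDensity (y - Z ω)) μ :=
  HN_int_bdd hZ continuous_stdGaussianDensity _
    (fun x => by rw [Real.norm_eq_abs, abs_of_pos (stdGaussianDensity_pos x)]
                 exact stdGaussianDensity_le x) y

lemma integral_gaussPsi_eq (hZ : Measurable Z) (hZ2 : Integrable (fun ω => ‖Z ω‖ ^ 2) μ)
    (y : EuclideanSpace ℝ (Fin L)) (l : Fin L) :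
    ∫ ω, gaussPsi l (y - Z ω) ∂μ
      = (∫ ω, Z ω l * stdGaussianDensity (y - Z ω) ∂μ) - y l * outDensity μ Z y := by
  have h : (fun ω => gaussPsi l (y - Z ω))
      = fun ω => Z ω l * stdGaussianDensity (y - Z ω)
          - y l * stdGaussianDensity (y - Z ω) := by
    funext ω
    have hc : (y - Z ω) l = y l - Z ω l := rfl
    rw [gaussPsi, hc]; ring
  rw [h, integral_sub (integrable_Zl_phi hZ hZ2 y l)
    ((integrable_phi_comp hZ y).const_mul (y l)), integral_const_mul, outDensity]

lemma integral_second_eq (hZ : Measurable Z) (hZ2 : Integrable (fun ω => ‖Z ω‖ ^ 2) μ)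
    (y : EuclideanSpace ℝ (Fin L)) (l : Fin L) :
    ∫ ω, ((y - Z ω) l ^ 2 * stdGaussianDensity (y - Z ω)
        - stdGaussianDensity (y - Z ω)) ∂μ
      = y l ^ 2 * outDensity μ Z y
        - 2 * y l * (∫ ω, Z ω l * stdGaussianDensity (y - Z ω) ∂μ)
        + (∫ ω, Z ω l ^ 2 * stdGaussianDensity (y - Z ω) ∂μ) - outDensity μ Z y := by
  have I1 := (integrable_phi_comp (μ := μ) hZ y).const_mul (y l ^ 2)
  have I2 := (integrable_Zl_phi hZ hZ2 y l).const_mul (2 * y l)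
  have I3 := integrable_Zl_sq_phi hZ hZ2 y l
  have I4 := integrable_phi_comp (μ := μ) hZ y
  have h : (fun ω => (y - Z ω) l ^ 2 * stdGaussianDensity (y - Z ω)
      - stdGaussianDensity (y - Z ω))
      = fun ω => (y l ^ 2 * stdGaussianDensity (y - Z ω)
          - 2 * y l * (Z ω l * stdGaussianDensity (y - Z ω))
          + Z ω l ^ 2 * stdGaussianDensity (y - Z ω))
          - stdGaussianDensity (y - Z ω) := by
    funext ω
    have hc : (y - Z ω) l = y l - Z ω l := rfl
    rw [hc]; ring
  have I12 : Integrable (fun ω => y l ^ 2 * stdGaussianDensity (y - Z ω)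
      - 2 * y l * (Z ω l * stdGaussianDensity (y - Z ω))) μ := I1.sub I2
  have I123 : Integrable (fun ω => y l ^ 2 * stdGaussianDensity (y - Z ω)
      - 2 * y l * (Z ω l * stdGaussianDensity (y - Z ω))
      + Z ω l ^ 2 * stdGaussianDensity (y - Z ω)) μ := I12.add I3
  rw [h, integral_sub I123 I4, integral_add I12 I3,
    integral_sub I1 I2, integral_const_mul, integral_const_mul, outDensity]

end

/-- **Hatsell–Nolte identity** (Lemma 3): for the channel `Y = Z + N`, the log-likelihood
ratio satisfies Poisson's equation `∇² log l(y) = E[‖Z‖² | Y = y] − ‖E[Z | Y = y]‖²`. -/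
theorem laplacian_log_likRatio
    {Ω : Type*} [MeasurableSpace Ω] (μ : Measure Ω) [IsProbabilityMeasure μ]
    {L : ℕ} (Z : Ω → EuclideanSpace ℝ (Fin L)) (hZ : Measurable Z)
    (hZ2 : Integrable (fun ω => ‖Z ω‖ ^ 2) μ) :
    ∀ y : EuclideanSpace ℝ (Fin L),
      laplacian (fun y' => Real.log (likRatio μ Z y')) y
        = (∫ ω, ‖Z ω‖ ^ 2 * stdGaussianDensity (y - Z ω) ∂μ) / outDensity μ Z y
          - ‖condMeanBayes μ Z y‖ ^ 2 := by
  intro y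
  have hgpos := outDensity_pos (μ := μ) hZ y
  rw [laplacian]
  have hterm : ∀ l : Fin L,
      fderiv ℝ (fun z => fderiv ℝ (fun y' => Real.log (likRatio μ Z y')) z
          (EuclideanSpace.single l 1)) y (EuclideanSpace.single l 1)
        = (∫ ω, Z ω l ^ 2 * stdGaussianDensity (y - Z ω) ∂μ) / outDensity μ Z y
          - ((∫ ω, Z ω l * stdGaussianDensity (y - Z ω) ∂μ) / outDensity μ Z y) ^ 2 := by
    intro l
    rw [fderiv_fderiv_log_likRatio hZ y l, integral_second_eq hZ hZ2 y l,
      integral_gaussPsi_eq hZ hZ2 y l]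
    field_simp
    ring
  rw [Finset.sum_congr rfl (fun l _ => hterm l)]
  rw [Finset.sum_sub_distrib, ← Finset.sum_div]
  congr 1
  · congr 1
    rw [← integral_finset_sum _ (fun l _ => integrable_Zl_sq_phi hZ hZ2 y l)]
    congr 1
    funext ω
    rw [← Finset.sum_mul]
    congr 1
    rw [PiLp.norm_sq_eq_of_L2]
    exact Finset.sum_congr rfl fun l _ => by rw [Real.norm_eq_abs, sq_abs]
  · rw [PiLp.norm_sq_eq_of_L2]
    refine Finset.sum_congr rfl fun l _ => ?_
    have hc : condMeanBayes μ Z y l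
        = (∫ ω, Z ω l * stdGaussianDensity (y - Z ω) ∂μ) / outDensity μ Z y := rfl
    rw [Real.norm_eq_abs, sq_abs, hc]
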